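/- With the normalization Φ_n(0) = 1, the degree identity holds: Σ_{f : d⟨a|d⟩ ∣ f ∣ ad} φ(f) = a·φ(d), where φ is Euler's totient and ⟨a|d⟩ = ∏_{p|gcd(a,d)} p^{ord_p(a)}. -/

import Mathlib

/-- `⟨a|d⟩ = ∏_{p ∣ gcd(a,d)} p^{ord_p(a)}`. -/
def bracket (a d : ℕ) : ℕ :=
  ∏ p ∈ (Nat.gcd a d).primeFactors, p ^ (a.factorization p)

lemma bracket_pos (a d : ℕ) : 0 < bracket a d :=
  Finset.prod_pos fun p hp => pow_pos (Nat.pos_of_mem_primeFactors hp) _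

lemma bracket_dvd (a d : ℕ) (ha : a ≠ 0) : bracket a d ∣ a := by
  conv_rhs => rw [← Nat.factorization_prod_pow_eq_self ha]
  exact Finset.prod_dvd_prod_of_subset _ _ _
    (Nat.primeFactors_mono (Nat.gcd_dvd_left a d) ha)

lemma bracket_factorization (a d p : ℕ) :
    (bracket a d).factorization p =
      if p ∈ (Nat.gcd a d).primeFactors then a.factorization p else 0 := by
  unfold bracket
  rw [Nat.factorization_prod (fun q hq =>
    pow_ne_zero _ (Nat.pos_of_mem_primeFactors hq).ne')]
  rw [Finset.sum_apply']
  rw [Finset.sum_congr rfl (fun q hq => by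
    rw [(Nat.prime_of_mem_primeFactors hq).factorization_pow, Finsupp.single_apply])]
  simp [Finset.sum_ite_eq]

lemma bracket_prime_dvd {a d p : ℕ} (hp : p.Prime) (h : p ∣ bracket a d) : p ∣ d := by
  obtain ⟨q, hq, hpq⟩ := hp.prime.exists_mem_finset_dvd h
  have hq' := Nat.prime_of_mem_primeFactors hq
  have : p = q := (Nat.prime_dvd_prime_iff_eq hp hq').mp (hp.dvd_of_dvd_pow hpq)
  exact this ▸ (Nat.dvd_of_mem_primeFactors hq).trans (Nat.gcd_dvd_right a d)

lemma totient_mul_of_primes_dvd : ∀ m : ℕ, ∀ n : ℕ,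
    (∀ p, p.Prime → p ∣ m → p ∣ n) → Nat.totient (m * n) = m * Nat.totient n := by
  intro m
  induction m using Nat.strong_induction_on with
  | _ m ih =>
    intro n hmn
    rcases Nat.eq_zero_or_pos m with rfl | hm
    · simp
    rcases eq_or_lt_of_le (show 1 ≤ m from hm) with h1 | h1
    · simp [← h1]
    · -- 2 ≤ m
      have hm1 : m ≠ 1 := by omega
      set p := m.minFac with hp_def
      have hp : p.Prime := Nat.minFac_prime hm1
      have hpm : p ∣ m := Nat.minFac_dvd m
      obtain ⟨k, hk⟩ := hpm
      have hk0 : k ≠ 0 := by rintro rfl; simp at hk; omega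
      have hklt : k < m := by
        rw [hk]
        exact Nat.lt_mul_iff_one_lt_left (Nat.pos_of_ne_zero hk0) |>.mpr hp.one_lt
      have hpn : p ∣ n := hmn p hp ⟨k, hk⟩
      have hkn : ∀ q, q.Prime → q ∣ k → q ∣ n := fun q hq hqk =>
        hmn q hq (hqk.trans ⟨p, by rw [hk, mul_comm]⟩)
      calc Nat.totient (m * n) = Nat.totient (p * (k * n)) := by rw [hk, mul_assoc]
        _ = p * Nat.totient (k * n) :=
            Nat.totient_mul_of_prime_of_dvd hp (hpn.trans (dvd_mul_left n k))
        _ = p * (k * Nat.totient n) := by rw [ih k hklt n hkn]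
        _ = m * Nat.totient n := by rw [hk, mul_assoc]

/-- Degree identity: `Σ_{f : d⟨a|d⟩ ∣ f ∣ ad} φ(f) = a·φ(d)`. -/
theorem totient_sum_identity (a d : ℕ) (ha : 0 < a) (hd : 0 < d) :
    ∑ f ∈ (a * d).divisors.filter (fun f => d * bracket a d ∣ f),
      Nat.totient f = a * Nat.totient d := by
  set b := bracket a d with hb_def
  have hb : 0 < b := bracket_pos a d
  have hbdvd : b ∣ a := bracket_dvd a d ha.ne'
  set m := d * b with hm_def
  set c := a / b with hc_def
  have hm : 0 < m := Nat.mul_pos hd hb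
  have hc : 0 < c := Nat.div_pos (Nat.le_of_dvd ha hbdvd) hb
  have hbc : b * c = a := Nat.mul_div_cancel' hbdvd
  have had : a * d = m * c := by
    rw [hm_def, ← hbc]; ring
  have hcdvd : c ∣ a := ⟨b, by rw [← hbc, mul_comm]⟩
  -- primes of b divide d
  have hbd : ∀ p, p.Prime → p ∣ b → p ∣ d := fun p hp h => bracket_prime_dvd hp h
  -- coprimality of m and c
  have hcop : Nat.Coprime m c := by
    by_contra hg
    have hgne : Nat.gcd m c ≠ 1 := hg
    set p := (Nat.gcd m c).minFac with hp_def
    have hp : p.Prime := Nat.minFac_prime hgne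
    have hpm : p ∣ m := (Nat.minFac_dvd _).trans (Nat.gcd_dvd_left _ _)
    have hpc : p ∣ c := (Nat.minFac_dvd _).trans (Nat.gcd_dvd_right _ _)
    have hpd : p ∣ d := by
      rcases (Nat.Prime.dvd_mul hp).mp hpm with h | h
      · exact h
      · exact hbd p hp h
    have hpa : p ∣ a := hpc.trans hcdvd
    have hpg : p ∈ (Nat.gcd a d).primeFactors := by
      rw [Nat.mem_primeFactors]
      exact ⟨hp, Nat.dvd_gcd hpa hpd, Nat.gcd_ne_zero_left ha.ne'⟩
    have h1 : c.factorization p = 0 := by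
      rw [hc_def, Nat.factorization_div hbdvd]
      rw [hb_def, Finsupp.tsub_apply, bracket_factorization a d p, if_pos hpg]
      simp
    have h2 : 0 < c.factorization p := hp.factorization_pos_of_dvd hc.ne' hpc
    omega
  -- reindex the sum
  have hsum : ∑ f ∈ (a * d).divisors.filter (fun f => m ∣ f), Nat.totient f
      = ∑ g ∈ c.divisors, Nat.totient (m * g) := by
    refine Finset.sum_nbij' (fun f => f / m) (fun g => m * g) ?_ ?_ ?_ ?_ ?_
    · intro f hf
      simp only [Finset.mem_filter, Nat.mem_divisors] at hf
      obtain ⟨⟨hfd, _⟩, hmf⟩ := hf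
      rw [Nat.mem_divisors]
      obtain ⟨e, rfl⟩ := hmf
      rw [had] at hfd
      rw [Nat.mul_div_cancel_left _ hm]
      exact ⟨(mul_dvd_mul_iff_left hm.ne').mp hfd, hc.ne'⟩
    · intro g hg
      simp only [Nat.mem_divisors] at hg
      simp only [Finset.mem_filter, Nat.mem_divisors]
      exact ⟨⟨by rw [had]; exact mul_dvd_mul_left m hg.1, by positivity⟩,
        dvd_mul_right m g⟩
    · intro f hf
      simp only [Finset.mem_filter] at hf
      exact Nat.mul_div_cancel' hf.2
    · intro g _
      exact Nat.mul_div_cancel_left g hm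
    · intro f hf
      simp only [Finset.mem_filter] at hf
      rw [Nat.mul_div_cancel' hf.2]
  rw [hsum]
  have hstep : ∀ g ∈ c.divisors, Nat.totient (m * g) = Nat.totient m * Nat.totient g := by
    intro g hg
    exact Nat.totient_mul (hcop.coprime_dvd_right (Nat.dvd_of_mem_divisors hg))
  rw [Finset.sum_congr rfl hstep, ← Finset.mul_sum, Nat.sum_totient]
  have htm : Nat.totient m = b * Nat.totient d := by
    rw [hm_def, mul_comm d b]
    exact totient_mul_of_primes_dvd b d hbd
  rw [htm]
  calc b * Nat.totient d * c = Nat.totient d * (b * c) := by ring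
    _ = a * Nat.totient d := by rw [hbc, mul_comm]
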